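/- Let γ_c(k) = C ℓ(k) k^{2d−1} with 0 < d < 1/2, C > 0, ℓ slowly varying with limit (2d+1)/(4d), and define S(H) = Σ_{k=1}^{Hm} k γ_c(k) + Σ_{k=Hm+1}^{2Hm−1} (2Hm − k) γ_c(k) for positive integers H, m. Then S(H) ∼ C ℓ(Hm) (Hm)^{2d+1} (2^{2d} − 1) / (d(2d+1)) as H → ∞. -/

import Mathlib

open Real Filter

section AggHelpers
open Asymptotics


lemma agg_sum_shift (u : ℕ → ℝ) (h0 : u 0 = 0) (n : ℕ) :
    ∑ k ∈ Finset.range (n+1), u k = ∑ k ∈ Finset.Icc 1 n, u k := by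
  induction n with
  | zero => simp [h0]
  | succ n ih =>
      rw [Finset.sum_range_succ, ih, Finset.sum_Icc_succ_top (by omega : 1 ≤ n+1)]

lemma agg_pow_sum {α : ℝ} (hα : -1 < α) (hα0 : α ≠ 0) :
    Tendsto (fun n : ℕ => (∑ k ∈ Finset.Icc 1 n, (k : ℝ) ^ α) / (n : ℝ) ^ (α + 1))
      atTop (nhds (1 / (α + 1))) := by
  have hα1 : 0 < α + 1 := by linarith
  set S : ℕ → ℝ := fun n => ∑ k ∈ Finset.Icc 1 n, (k : ℝ) ^ α with hS
  have hu0 : ((0 : ℕ) : ℝ) ^ α = 0 := by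
    simp [Real.zero_rpow hα0]
  have hrange : ∀ n : ℕ, ∑ k ∈ Finset.range (n+1), ((k : ℝ)) ^ α = S n :=
    fun n => agg_sum_shift (fun k => (k : ℝ) ^ α) hu0 n
  have hpow : Tendsto (fun n : ℕ => ((n : ℝ)) ^ (α + 1)) atTop atTop :=
    (tendsto_rpow_atTop hα1).comp tendsto_natCast_atTop_atTop
  have hinv : Tendsto (fun n : ℕ => ((n : ℝ))⁻¹) atTop (nhds 0) :=
    tendsto_inv_atTop_nhds_zero_nat
  rcases le_or_gt 0 α with hpos | hneg
  · -- monotone case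
    have hlow : ∀ n : ℕ, (n : ℝ) ^ (α + 1) / (α + 1) ≤ S n := by
      intro n
      have hf : MonotoneOn (fun x : ℝ => x ^ α) (Set.Icc (0:ℝ) (0 + (n:ℕ))) :=
        fun x hx y hy hxy => Real.rpow_le_rpow hx.1 hxy hpos
      have h1 := hf.integral_le_sum
      have h2 : (∫ x in (0:ℝ)..(0 + (n:ℕ)), x ^ α) = (n : ℝ) ^ (α + 1) / (α + 1) := by
        rw [integral_rpow (Or.inl hα)]
        simp [Real.zero_rpow (ne_of_gt hα1)]
      have h3 : ∑ i ∈ Finset.range n, ((0:ℝ) + ((i + 1 : ℕ) : ℕ)) ^ α = S n := by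
        rw [← hrange n, Finset.sum_range_succ' (fun k => ((k:ℕ) : ℝ) ^ α) n]
        simp [Real.zero_rpow hα0]
      rw [h2, h3] at h1
      exact h1
    have hup : ∀ n : ℕ, S n ≤ (n : ℝ) ^ (α + 1) / (α + 1) + (n : ℝ) ^ α := by
      intro n
      have hf : MonotoneOn (fun x : ℝ => x ^ α) (Set.Icc (0:ℝ) (0 + (n:ℕ))) :=
        fun x hx y hy hxy => Real.rpow_le_rpow hx.1 hxy hpos
      have h1 := hf.sum_le_integral
      have h2 : (∫ x in (0:ℝ)..(0 + (n:ℕ)), x ^ α) = (n : ℝ) ^ (α + 1) / (α + 1) := by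
        rw [integral_rpow (Or.inl hα)]
        simp [Real.zero_rpow (ne_of_gt hα1)]
      have h3 : S n = (∑ i ∈ Finset.range n, ((0:ℝ) + (i:ℕ)) ^ α) + (n : ℝ) ^ α := by
        rw [← hrange n, Finset.sum_range_succ]
        simp
      rw [h2] at h1
      rw [h3]
      linarith
    refine tendsto_of_tendsto_of_tendsto_of_le_of_le'
      (g := fun n : ℕ => ((n:ℝ) ^ (α + 1) / (α + 1)) / (n : ℝ) ^ (α + 1))
      (h := fun n : ℕ => ((n:ℝ) ^ (α + 1) / (α + 1) + (n:ℝ) ^ α) / (n : ℝ) ^ (α + 1))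
      ?_ ?_ ?_ ?_
    · have : Tendsto (fun _ : ℕ => 1 / (α + 1)) atTop (nhds (1 / (α + 1))) := tendsto_const_nhds
      apply this.congr'
      filter_upwards [eventually_ge_atTop 1] with n hn
      have hnp : (0:ℝ) < (n:ℝ) ^ (α+1) :=
        Real.rpow_pos_of_pos (by exact_mod_cast Nat.pos_of_ne_zero (by omega)) _
      field_simp
    · have h2 : Tendsto (fun n : ℕ => 1 / (α + 1) + ((n:ℝ))⁻¹) atTop (nhds (1 / (α + 1))) := by
        simpa using tendsto_const_nhds.add hinv
      apply h2.congr'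
      filter_upwards [eventually_ge_atTop 1] with n hn
      have hn0 : (0:ℝ) < (n:ℝ) := by exact_mod_cast Nat.pos_of_ne_zero (by omega)
      have hnp : (0:ℝ) < (n:ℝ) ^ (α+1) := Real.rpow_pos_of_pos hn0 _
      have hsub : (n:ℝ) ^ α / (n:ℝ) ^ (α+1) = ((n:ℝ))⁻¹ := by
        rw [← Real.rpow_sub hn0]
        norm_num [Real.rpow_neg_one]
      rw [add_div, hsub]
      congr 1
      field_simp
    · filter_upwards [eventually_ge_atTop 1] with n hn
      have hnp : (0:ℝ) < (n:ℝ) ^ (α+1) :=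
        Real.rpow_pos_of_pos (by exact_mod_cast Nat.pos_of_ne_zero (by omega)) _
      exact div_le_div_of_nonneg_right (hlow n) hnp.le
    · filter_upwards [eventually_ge_atTop 1] with n hn
      have hnp : (0:ℝ) < (n:ℝ) ^ (α+1) :=
        Real.rpow_pos_of_pos (by exact_mod_cast Nat.pos_of_ne_zero (by omega)) _
      exact div_le_div_of_nonneg_right (hup n) hnp.le
  · -- antitone case
    have hanti : ∀ b : ℝ, AntitoneOn (fun x : ℝ => x ^ α) (Set.Icc (1:ℝ) b) := by
      intro b
      apply (Real.antitoneOn_rpow_Ioi_of_exponent_nonpos hneg.le).mono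
      intro x hx
      exact lt_of_lt_of_le one_pos hx.1
    have hlow : ∀ n : ℕ, (((n:ℝ) + 1) ^ (α + 1) - 1) / (α + 1) ≤ S n := by
      intro n
      have hf : AntitoneOn (fun x : ℝ => x ^ α)
          (Set.Icc (((1:ℕ):ℝ)) (((n+1:ℕ):ℝ))) := by
        simpa using hanti ((n+1:ℕ):ℝ)
      have h1 := hf.integral_le_sum_Ico (by omega : (1:ℕ) ≤ n + 1)
      have h2 : (∫ x in ((1:ℕ):ℝ)..((n+1:ℕ):ℝ), x ^ α)
          = (((n:ℝ) + 1) ^ (α + 1) - 1) / (α + 1) := by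
        rw [integral_rpow (Or.inl hα)]
        push_cast
        simp
      have h3 : ∑ x ∈ Finset.Ico 1 (n+1), ((x:ℕ):ℝ) ^ α = S n := by
        rw [Finset.Ico_add_one_right_eq_Icc]
      rw [h2, h3] at h1
      exact h1
    have hup : ∀ n : ℕ, 1 ≤ n → S n ≤ 1 + ((n:ℝ) ^ (α + 1) - 1) / (α + 1) := by
      intro n hn
      have hf : AntitoneOn (fun x : ℝ => x ^ α)
          (Set.Icc (((1:ℕ):ℝ)) (((n:ℕ):ℝ))) := by
        simpa using hanti ((n:ℕ):ℝ)
      have h1 := hf.sum_le_integral_Ico hn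
      have h2 : (∫ x in ((1:ℕ):ℝ)..((n:ℕ):ℝ), x ^ α)
          = ((n:ℝ) ^ (α + 1) - 1) / (α + 1) := by
        rw [integral_rpow (Or.inl hα)]
        push_cast
        simp
      have h3 : S n = 1 + ∑ i ∈ Finset.Ico 1 n, (((i + 1 : ℕ)):ℝ) ^ α := by
        clear h1 h2 hf
        induction n, hn using Nat.le_induction with
        | base => simp [hS]
        | succ k hk ih =>
            simp only [hS] at ih ⊢
            rw [Finset.sum_Icc_succ_top (by omega : 1 ≤ k+1),
              Finset.sum_Ico_succ_top hk, ih]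
            push_cast
            ring
      rw [h2] at h1
      rw [h3]
      linarith
    refine tendsto_of_tendsto_of_tendsto_of_le_of_le'
      (g := fun n : ℕ => ((((n:ℝ) + 1) ^ (α + 1) - 1) / (α + 1)) / (n : ℝ) ^ (α + 1))
      (h := fun n : ℕ => (1 + ((n:ℝ) ^ (α + 1) - 1) / (α + 1)) / (n : ℝ) ^ (α + 1))
      ?_ ?_ ?_ ?_
    · -- lower bound tendsto
      have t1 : Tendsto (fun n : ℕ => (1 + ((n:ℝ))⁻¹) ^ (α + 1)) atTop (nhds 1) := by
        have := (((tendsto_const_nhds (x := (1:ℝ)))).add hinv).rpow_const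
          (p := α + 1) (Or.inr hα1.le)
        simpa using this
      have t3 : Tendsto (fun n : ℕ => (((n:ℝ)) ^ (α + 1))⁻¹) atTop (nhds 0) :=
        hpow.inv_tendsto_atTop
      have t4 : Tendsto
          (fun n : ℕ => ((1 + ((n:ℝ))⁻¹) ^ (α + 1) - (((n:ℝ)) ^ (α + 1))⁻¹) / (α + 1))
          atTop (nhds (1 / (α + 1))) := by
        simpa using (t1.sub t3).div_const (α + 1)
      apply t4.congr'
      filter_upwards [eventually_ge_atTop 1] with n hn
      have hn0 : (0:ℝ) < (n:ℝ) := by exact_mod_cast Nat.pos_of_ne_zero (by omega)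
      have hnp : (0:ℝ) < (n:ℝ) ^ (α+1) := Real.rpow_pos_of_pos hn0 _
      have key : ((n:ℝ) + 1) ^ (α + 1) = (1 + ((n:ℝ))⁻¹) ^ (α + 1) * (n:ℝ) ^ (α + 1) := by
        rw [← Real.mul_rpow (by positivity) hn0.le]
        congr 1
        field_simp
      rw [key]
      have ha0 : α + 1 ≠ 0 := hα1.ne'
      generalize hx : ((n:ℝ)) ^ (α+1) = x at hnp
      have hx0 : x ≠ 0 := hnp.ne'
      generalize (1 + ((n:ℝ))⁻¹) ^ (α + 1) = y
      field_simp
    · -- upper bound tendsto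
      have t3 : Tendsto (fun n : ℕ => (((n:ℝ)) ^ (α + 1))⁻¹) atTop (nhds 0) :=
        hpow.inv_tendsto_atTop
      have t4 : Tendsto
          (fun n : ℕ => (((n:ℝ)) ^ (α + 1))⁻¹ + (1 - (((n:ℝ)) ^ (α + 1))⁻¹) / (α + 1))
          atTop (nhds (1 / (α + 1))) := by
        simpa using t3.add (((tendsto_const_nhds (x := (1:ℝ))).sub t3).div_const (α + 1))
      apply t4.congr'
      filter_upwards [eventually_ge_atTop 1] with n hn
      have hn0 : (0:ℝ) < (n:ℝ) := by exact_mod_cast Nat.pos_of_ne_zero (by omega)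
      have hnp : (0:ℝ) < (n:ℝ) ^ (α+1) := Real.rpow_pos_of_pos hn0 _
      have ha0 : α + 1 ≠ 0 := hα1.ne'
      generalize hx : ((n:ℝ)) ^ (α+1) = x at hnp
      have hx0 : x ≠ 0 := hnp.ne'
      field_simp
    · filter_upwards [eventually_ge_atTop 1] with n hn
      have hnp : (0:ℝ) < (n:ℝ) ^ (α+1) :=
        Real.rpow_pos_of_pos (by exact_mod_cast Nat.pos_of_ne_zero (by omega)) _
      exact div_le_div_of_nonneg_right (hlow n) hnp.le
    · filter_upwards [eventually_ge_atTop 1] with n hn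
      have hnp : (0:ℝ) < (n:ℝ) ^ (α+1) :=
        Real.rpow_pos_of_pos (by exact_mod_cast Nat.pos_of_ne_zero (by omega)) _
      exact div_le_div_of_nonneg_right (hup n hn) hnp.le

lemma agg_slow_sum {α L : ℝ} (hα : -1 < α) (hα0 : α ≠ 0) (ℓ : ℕ → ℝ)
    (hℓ : Tendsto ℓ atTop (nhds L)) :
    Tendsto (fun n : ℕ => (∑ k ∈ Finset.Icc 1 n, ℓ k * (k : ℝ) ^ α) / (n : ℝ) ^ (α + 1))
      atTop (nhds (L / (α + 1))) := by
  have hα1 : 0 < α + 1 := by linarith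
  set g : ℕ → ℝ := fun k => if k = 0 then 0 else (k : ℝ) ^ α with hg
  set f : ℕ → ℝ := fun k => (ℓ k - L) * g k with hf
  have hg0 : ∀ k, 0 ≤ g k := by
    intro k
    by_cases h : k = 0 <;> simp [hg, h, Real.rpow_nonneg (Nat.cast_nonneg k)]
  have hgIcc : ∀ n : ℕ, ∑ k ∈ Finset.Icc 1 n, g k = ∑ k ∈ Finset.Icc 1 n, (k : ℝ) ^ α := by
    intro n
    refine Finset.sum_congr rfl fun k hk => ?_
    have : k ≠ 0 := by have := (Finset.mem_Icc.1 hk).1; omega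
    simp [hg, this]
  have hfIcc : ∀ n : ℕ, ∑ k ∈ Finset.Icc 1 n, f k
      = ∑ k ∈ Finset.Icc 1 n, (ℓ k - L) * (k : ℝ) ^ α := by
    intro n
    refine Finset.sum_congr rfl fun k hk => ?_
    have : k ≠ 0 := by have := (Finset.mem_Icc.1 hk).1; omega
    simp [hf, hg, this]
  have hB := agg_pow_sum hα hα0
  have hpow : Tendsto (fun n : ℕ => ((n : ℝ)) ^ (α + 1)) atTop atTop :=
    (tendsto_rpow_atTop hα1).comp tendsto_natCast_atTop_atTop
  -- sums of g tend to infinity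
  have hSg : Tendsto (fun n : ℕ => ∑ k ∈ Finset.Icc 1 n, (k : ℝ) ^ α) atTop atTop := by
    have := (Tendsto.pos_mul_atTop (by positivity : (0:ℝ) < 1 / (α + 1)) hB hpow)
    apply this.congr'
    filter_upwards [eventually_ge_atTop 1] with n hn
    have hnp : (0:ℝ) < (n:ℝ) ^ (α+1) :=
      Real.rpow_pos_of_pos (by exact_mod_cast Nat.pos_of_ne_zero (by omega)) _
    field_simp
  have hgrange : Tendsto (fun n : ℕ => ∑ k ∈ Finset.range n, g k) atTop atTop := by
    rw [← tendsto_add_atTop_iff_nat 1]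
    have : (fun n : ℕ => ∑ k ∈ Finset.range (n+1), g k)
        = fun n : ℕ => ∑ k ∈ Finset.Icc 1 n, (k:ℝ) ^ α := by
      funext n
      rw [agg_sum_shift g (by simp [hg]) n, hgIcc]
    rw [this]
    exact hSg
  -- f is little-o of g
  have hfo : f =o[atTop] g := by
    rw [Asymptotics.isLittleO_iff]
    intro ε hε
    have hsub : Tendsto (fun k => ℓ k - L) atTop (nhds 0) := by
      simpa using hℓ.sub (tendsto_const_nhds (x := L))
    have hev : ∀ᶠ k in atTop, |ℓ k - L| < ε := by
      have := hsub (Metric.ball_mem_nhds (0:ℝ) hε)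
      simpa [Real.dist_eq] using this
    filter_upwards [hev] with k hk
    have : ‖f k‖ = |ℓ k - L| * g k := by
      rw [hf]
      simp [abs_mul, abs_of_nonneg (hg0 k)]
    rw [this, Real.norm_eq_abs, abs_of_nonneg (hg0 k)]
    exact mul_le_mul_of_nonneg_right hk.le (hg0 k)
  have hsum := (hfo.sum_range hg0 hgrange).comp_tendsto (tendsto_add_atTop_nat 1)
  -- convert to Icc sums
  have hsumIcc : (fun n : ℕ => ∑ k ∈ Finset.Icc 1 n, (ℓ k - L) * (k:ℝ) ^ α)
      =o[atTop] (fun n : ℕ => ∑ k ∈ Finset.Icc 1 n, (k:ℝ) ^ α) := by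
    have e1 : (fun n : ℕ => ∑ k ∈ Finset.range (n+1), f k)
        = fun n : ℕ => ∑ k ∈ Finset.Icc 1 n, (ℓ k - L) * (k:ℝ) ^ α := by
      funext n
      rw [agg_sum_shift f (by simp [hf, hg]) n, hfIcc]
    have e2 : (fun n : ℕ => ∑ k ∈ Finset.range (n+1), g k)
        = fun n : ℕ => ∑ k ∈ Finset.Icc 1 n, (k:ℝ) ^ α := by
      funext n
      rw [agg_sum_shift g (by simp [hg]) n, hgIcc]
    simpa [Function.comp_def, e1, e2] using hsum
  have hdiv := hsumIcc.tendsto_div_nhds_zero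
  -- error term over n^(α+1) tends to 0
  have herr : Tendsto
      (fun n : ℕ => (∑ k ∈ Finset.Icc 1 n, (ℓ k - L) * (k:ℝ) ^ α) / (n : ℝ) ^ (α + 1))
      atTop (nhds 0) := by
    have h0 := hdiv.mul hB
    rw [zero_mul] at h0
    apply h0.congr'
    filter_upwards [eventually_ge_atTop 1] with n hn
    have hbpos : 0 < ∑ k ∈ Finset.Icc 1 n, (k:ℝ) ^ α := by
      apply Finset.sum_pos
      · intro k hk
        have hk1 := (Finset.mem_Icc.1 hk).1
        exact Real.rpow_pos_of_pos (by exact_mod_cast hk1) _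
      · exact ⟨1, Finset.mem_Icc.2 ⟨le_refl 1, hn⟩⟩
    rw [div_mul_div_cancel₀ hbpos.ne']
  -- final assembly
  have hsplit : ∀ n : ℕ, ∑ k ∈ Finset.Icc 1 n, ℓ k * (k : ℝ) ^ α
      = L * (∑ k ∈ Finset.Icc 1 n, (k : ℝ) ^ α)
        + ∑ k ∈ Finset.Icc 1 n, (ℓ k - L) * (k:ℝ) ^ α := by
    intro n
    rw [Finset.mul_sum, ← Finset.sum_add_distrib]
    refine Finset.sum_congr rfl fun k _ => ?_
    ring
  have hfin := (hB.const_mul L).add herr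
  rw [add_zero] at hfin
  have : L * (1 / (α + 1)) = L / (α + 1) := by ring
  rw [this] at hfin
  apply hfin.congr
  intro n
  rw [hsplit n, add_div, mul_div_assoc]

lemma agg_double {F : ℕ → ℝ} {β c : ℝ}
    (hF : Tendsto (fun n : ℕ => F n / (n:ℝ)^β) atTop (nhds c)) :
    Tendsto (fun n : ℕ => F (2*n-1) / (n:ℝ)^β) atTop (nhds ((2:ℝ)^β * c)) := by
  have h2n : Tendsto (fun n : ℕ => 2*n-1) atTop atTop := by
    apply tendsto_atTop_atTop.2
    intro b
    exact ⟨b+1, fun n hn => by omega⟩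
  have t1 : Tendsto (fun n : ℕ => F (2*n-1) / (((2*n-1 : ℕ)):ℝ)^β) atTop (nhds c) := hF.comp h2n
  have t2 : Tendsto (fun n : ℕ => (((2*n-1 : ℕ)):ℝ)^β / (n:ℝ)^β) atTop (nhds ((2:ℝ)^β)) := by
    have base : Tendsto (fun n : ℕ => 2 - ((n:ℝ))⁻¹) atTop (nhds 2) := by
      simpa using (tendsto_const_nhds (x := (2:ℝ))).sub tendsto_inv_atTop_nhds_zero_nat
    have hb := base.rpow_const (p := β) (Or.inl (by norm_num))
    apply hb.congr'
    filter_upwards [eventually_ge_atTop 1] with n hn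
    have hn0 : (0:ℝ) < (n:ℝ) := by exact_mod_cast Nat.pos_of_ne_zero (by omega)
    have hnn : (0:ℝ) ≤ 2 - ((n:ℝ))⁻¹ := by
      have : ((n:ℝ))⁻¹ ≤ 1 := by
        rw [inv_le_one_iff₀]
        right
        exact_mod_cast hn
      linarith
    have hcast : (((2*n-1 : ℕ)):ℝ) = (2 - ((n:ℝ))⁻¹) * (n:ℝ) := by
      have h1 : (1:ℕ) ≤ 2*n := by omega
      push_cast [Nat.cast_sub h1]
      field_simp
    rw [hcast, Real.mul_rpow hnn hn0.le, mul_div_assoc,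
      div_self (ne_of_gt (Real.rpow_pos_of_pos hn0 β)), mul_one]
  have hmul := t1.mul t2
  rw [mul_comm] at hmul
  apply hmul.congr'
  filter_upwards [eventually_ge_atTop 1] with n hn
  have hpos : (0:ℝ) < (((2*n-1 : ℕ)):ℝ)^β := by
    apply Real.rpow_pos_of_pos
    have : 1 ≤ 2*n-1 := by omega
    exact_mod_cast Nat.pos_of_ne_zero (by omega)
  rw [div_mul_div_cancel₀ hpos.ne']

end AggHelpers



open Real Filter

/-- For `γ_c(k) = C ℓ(k) k^{2d-1}` with `0 < d < 1/2`, `C > 0` and `ℓ`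
slowly varying with limit `(2d+1)/(4d)`, the weighted sum
`S(H) = Σ_{k=1}^{Hm} k γ_c(k) + Σ_{k=Hm+1}^{2Hm-1} (2Hm - k) γ_c(k)` satisfies
`S(H) ∼ C ℓ(Hm) (Hm)^{2d+1} (2^{2d} - 1) / (d(2d+1))` as `H → ∞`. -/
theorem aggregated_cross_covariance_asymptotic
    (C d : ℝ) (hd1 : 0 < d) (hd2 : d < 1/2) (hC : 0 < C)
    (m : ℕ) (hm : 0 < m)
    (ℓ : ℕ → ℝ) (hℓ : Tendsto ℓ atTop (nhds ((2*d+1)/(4*d))))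
    (γc : ℕ → ℝ)
    (hγ : ∀ k : ℕ, 1 ≤ k → γc k = C * ℓ k * (k : ℝ) ^ (2*d - 1)) :
    Tendsto (fun H : ℕ =>
        ((∑ k ∈ Finset.Icc 1 (H*m), (k : ℝ) * γc k)
          + ∑ k ∈ Finset.Icc (H*m+1) (2*H*m-1), ((2*H*m : ℕ) - (k : ℝ)) * γc k)
        / (C * ℓ (H*m) * ((H*m : ℕ) : ℝ) ^ (2*d + 1) * ((2 : ℝ) ^ (2*d) - 1)
            / (d * (2*d + 1))))
      atTop (nhds 1) := by
  set L : ℝ := (2*d+1)/(4*d) with hLdef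
  have hd2d1 : (0:ℝ) < 2*d + 1 := by linarith
  have hL : 0 < L := by
    apply div_pos hd2d1
    linarith
  set P : ℕ → ℝ := fun n => ∑ k ∈ Finset.Icc 1 n, ℓ k * (k:ℝ)^(2*d) with hPdef
  set Q : ℕ → ℝ := fun n => ∑ k ∈ Finset.Icc 1 n, ℓ k * (k:ℝ)^(2*d-1) with hQdef
  have hP : Tendsto (fun n : ℕ => P n / (n:ℝ)^(2*d+1)) atTop (nhds (L/(2*d+1))) :=
    agg_slow_sum (by linarith) (by positivity) ℓ hℓ
  have hQt : Tendsto (fun n : ℕ => Q n / (n:ℝ)^(2*d)) atTop (nhds (L/(2*d))) := by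
    have h := agg_slow_sum (α := 2*d-1) (by linarith) (by linarith) ℓ hℓ
    have e : 2*d - 1 + 1 = 2*d := by ring
    rw [e] at h
    exact h
  have hP2 := agg_double hP
  have hQ2 := agg_double hQt
  have hmt : Tendsto (fun H : ℕ => H * m) atTop atTop := by
    apply tendsto_atTop_atTop.2
    intro b
    exact ⟨b, fun H hH => le_trans hH (Nat.le_mul_of_pos_right H hm)⟩
  have A1 := hP.comp hmt
  have A2 := hP2.comp hmt
  have A3 := hQt.comp hmt
  have A4 := hQ2.comp hmt
  simp only [Function.comp_def] at A1 A2 A3 A4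
  set M : ℝ := L * ((2:ℝ)^(2*d) - 1) / (d * (2*d+1)) with hMdef
  have h2gt : (1:ℝ) < (2:ℝ)^(2*d) :=
    Real.one_lt_rpow_iff_of_pos (by norm_num) |>.2 (Or.inl ⟨by norm_num, by linarith⟩)
  have hM : 0 < M := by
    apply div_pos (mul_pos hL (by linarith)) (by positivity)
  have hMne : M ≠ 0 := hM.ne'
  -- the combined limit
  have hcomb : Tendsto (fun H : ℕ =>
      P (H*m) / ((H*m : ℕ):ℝ)^(2*d+1)
      + 2 * (Q (2*(H*m)-1) / ((H*m : ℕ):ℝ)^(2*d) - Q (H*m) / ((H*m : ℕ):ℝ)^(2*d))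
      - (P (2*(H*m)-1) / ((H*m : ℕ):ℝ)^(2*d+1) - P (H*m) / ((H*m : ℕ):ℝ)^(2*d+1)))
      atTop (nhds M) := by
    have h := (A1.add ((A4.sub A3).const_mul 2)).sub (A2.sub A1)
    have hval : L/(2*d+1) + 2 * ((2:ℝ)^(2*d) * (L/(2*d)) - L/(2*d))
        - ((2:ℝ)^(2*d+1) * (L/(2*d+1)) - L/(2*d+1)) = M := by
      rw [hMdef]
      have h21 : (2:ℝ)^(2*d+1) = 2 * (2:ℝ)^(2*d) := by
        rw [Real.rpow_add (by norm_num : (0:ℝ) < 2), Real.rpow_one]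
        ring
      rw [h21]
      field_simp
      ring
    rw [hval] at h
    exact h
  -- numerator rewrite
  have hNum : ∀ᶠ H : ℕ in atTop,
      ((∑ k ∈ Finset.Icc 1 (H*m), (k : ℝ) * γc k)
        + ∑ k ∈ Finset.Icc (H*m+1) (2*H*m-1), (((2*H*m : ℕ) : ℝ) - (k : ℝ)) * γc k)
      = C * (P (H*m) + (2*((H*m : ℕ):ℝ) * (Q (2*(H*m)-1) - Q (H*m))
          - (P (2*(H*m)-1) - P (H*m)))) := by
    filter_upwards [eventually_ge_atTop 1] with H hH
    have h2n : 2*H*m = 2*(H*m) := by ring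
    rw [h2n]
    set n := H*m with hn
    have hn1 : 1 ≤ n := Nat.mul_pos hH hm
    have s1 : ∑ k ∈ Finset.Icc 1 n, (k : ℝ) * γc k
        = C * ∑ k ∈ Finset.Icc 1 n, ℓ k * (k:ℝ)^(2*d) := by
      rw [Finset.mul_sum]
      refine Finset.sum_congr rfl fun k hk => ?_
      have hk1 : 1 ≤ k := (Finset.mem_Icc.1 hk).1
      have hkp : (0:ℝ) < (k:ℝ) := by exact_mod_cast hk1
      rw [hγ k hk1]
      have hs : (k:ℝ)^(2*d) = (k:ℝ) * (k:ℝ)^(2*d-1) := by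
        have h := Real.rpow_add hkp 1 (2*d-1)
        rw [show (1:ℝ) + (2*d-1) = 2*d by ring, Real.rpow_one] at h
        exact h
      rw [hs]
      ring
    have s2 : ∑ k ∈ Finset.Icc (n+1) (2*n-1), (((2*n : ℕ) : ℝ) - (k : ℝ)) * γc k
        = ∑ k ∈ Finset.Icc (n+1) (2*n-1),
            (C * (2*(n:ℝ) * (ℓ k * (k:ℝ)^(2*d-1))) - C * (ℓ k * (k:ℝ)^(2*d))) := by
      refine Finset.sum_congr rfl fun k hk => ?_
      have hk1 : 1 ≤ k := by have := (Finset.mem_Icc.1 hk).1; omega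
      have hkp : (0:ℝ) < (k:ℝ) := by exact_mod_cast hk1
      rw [hγ k hk1]
      have hcast : ((2*n : ℕ) : ℝ) = 2*(n:ℝ) := by push_cast; ring
      have hs : (k:ℝ)^(2*d) = (k:ℝ) * (k:ℝ)^(2*d-1) := by
        have h := Real.rpow_add hkp 1 (2*d-1)
        rw [show (1:ℝ) + (2*d-1) = 2*d by ring, Real.rpow_one] at h
        exact h
      rw [hcast, hs]
      ring
    have s2' : ∑ k ∈ Finset.Icc (n+1) (2*n-1),
          (C * (2*(n:ℝ) * (ℓ k * (k:ℝ)^(2*d-1))) - C * (ℓ k * (k:ℝ)^(2*d)))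
        = C * (2*(n:ℝ) * (∑ k ∈ Finset.Icc (n+1) (2*n-1), ℓ k * (k:ℝ)^(2*d-1))
            - ∑ k ∈ Finset.Icc (n+1) (2*n-1), ℓ k * (k:ℝ)^(2*d)) := by
      rw [Finset.sum_sub_distrib, ← Finset.mul_sum, ← Finset.mul_sum, ← Finset.mul_sum, ← mul_sub]
    have hsplit : ∀ u : ℕ → ℝ,
        (∑ k ∈ Finset.Icc 1 n, u k) + ∑ k ∈ Finset.Icc (n+1) (2*n-1), u k
          = ∑ k ∈ Finset.Icc 1 (2*n-1), u k := by
      intro u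
      have e1 : Finset.Icc 1 n = Finset.Ioc 0 n := by rw [← Finset.Icc_add_one_left_eq_Ioc]; rfl
      have e2 : Finset.Icc (n+1) (2*n-1) = Finset.Ioc n (2*n-1) := by rw [← Finset.Icc_add_one_left_eq_Ioc]
      have e3 : Finset.Icc 1 (2*n-1) = Finset.Ioc 0 (2*n-1) := by rw [← Finset.Icc_add_one_left_eq_Ioc]; rfl
      rw [e1, e2, e3]
      exact Finset.sum_Ioc_consecutive _ (by omega) (by omega)
    have hq : ∑ k ∈ Finset.Icc (n+1) (2*n-1), ℓ k * (k:ℝ)^(2*d-1) = Q (2*n-1) - Q n := by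
      have := hsplit (fun k => ℓ k * (k:ℝ)^(2*d-1))
      rw [hQdef]
      simp only at this ⊢
      linarith
    have hp : ∑ k ∈ Finset.Icc (n+1) (2*n-1), ℓ k * (k:ℝ)^(2*d) = P (2*n-1) - P n := by
      have := hsplit (fun k => ℓ k * (k:ℝ)^(2*d))
      rw [hPdef]
      simp only at this ⊢
      linarith
    rw [s1, s2, s2', hq, hp]
    have hPn : ∑ k ∈ Finset.Icc 1 n, ℓ k * (k:ℝ)^(2*d) = P n := by rw [hPdef]
    rw [hPn]
    ring
  -- T1 : numerator over C n^(2d+1)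
  have T1 : Tendsto (fun H : ℕ =>
      ((∑ k ∈ Finset.Icc 1 (H*m), (k : ℝ) * γc k)
        + ∑ k ∈ Finset.Icc (H*m+1) (2*H*m-1), (((2*H*m : ℕ) : ℝ) - (k : ℝ)) * γc k)
      / (C * ((H*m : ℕ) : ℝ)^(2*d+1))) atTop (nhds M) := by
    apply hcomb.congr'
    filter_upwards [hNum, eventually_ge_atTop 1] with H hN hH
    rw [hN]
    have hn1 : 1 ≤ H*m := Nat.mul_pos hH hm
    have hn0 : (0:ℝ) < ((H*m : ℕ) : ℝ) := by exact_mod_cast hn1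
    have hp2d : (0:ℝ) < ((H*m : ℕ) : ℝ)^(2*d) := Real.rpow_pos_of_pos hn0 _
    have hkey : ((H*m : ℕ) : ℝ)^(2*d+1) = ((H*m : ℕ) : ℝ)^(2*d) * ((H*m : ℕ) : ℝ) := by
      rw [Real.rpow_add hn0, Real.rpow_one]
    rw [hkey]
    field_simp
    ring
  -- T2 : denominator over C n^(2d+1)
  have T2 : Tendsto (fun H : ℕ =>
      (C * ℓ (H*m) * ((H*m : ℕ) : ℝ) ^ (2*d + 1) * ((2 : ℝ) ^ (2*d) - 1) / (d * (2*d + 1)))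
      / (C * ((H*m : ℕ) : ℝ)^(2*d+1))) atTop (nhds M) := by
    have hl := hℓ.comp hmt
    simp only [Function.comp_def] at hl
    have hmc := hl.mul_const (((2:ℝ)^(2*d) - 1) / (d*(2*d+1)))
    have hval : L * (((2:ℝ)^(2*d) - 1) / (d*(2*d+1))) = M := by
      rw [hMdef]
      ring
    rw [hval] at hmc
    apply hmc.congr'
    filter_upwards [eventually_ge_atTop 1] with H hH
    have hn1 : 1 ≤ H*m := Nat.mul_pos hH hm
    have hn0 : (0:ℝ) < ((H*m : ℕ) : ℝ) := by exact_mod_cast hn1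
    have hp : (0:ℝ) < ((H*m : ℕ) : ℝ)^(2*d+1) := Real.rpow_pos_of_pos hn0 _
    field_simp
  -- finish
  have hfin := T1.div T2 hMne
  rw [div_self hMne] at hfin
  apply hfin.congr'
  filter_upwards [eventually_ge_atTop 1] with H hH
  have hn1 : 1 ≤ H*m := Nat.mul_pos hH hm
  have hn0 : (0:ℝ) < ((H*m : ℕ) : ℝ) := by exact_mod_cast hn1
  have hcn : C * ((H*m : ℕ) : ℝ)^(2*d+1) ≠ 0 :=
    (mul_pos hC (Real.rpow_pos_of_pos hn0 _)).ne'
  simp only [Pi.div_apply]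
  rw [div_div_div_comm, div_self hcn, div_one]
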